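/- For any i, j, k ∈ ℕ with j ≥ i and k ≥ 1, the subset S_{i,j,k} = {(i,i)} ∪ {(j, j+k)ⁿ : n ≥ 1} of the bicyclic monoid is closed under multiplication (with (i,i) acting as identity on S_{i,j,k}) and is isomorphic as a monoid to (ℕ, +); explicitly, (j, j+k)ⁿ = (j, j + n·k) for all n ≥ 1. -/
import Mathlib


def bmul (x y : ℕ × ℕ) : ℕ × ℕ :=
  (x.1 + y.1 - min x.2 y.1, x.2 + y.2 - min x.2 y.1)

abbrev Cplus := {x : ℕ × ℕ // x.1 ≤ x.2}

instance : Mul Cplus :=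
  ⟨fun x y => ⟨bmul x.1 y.1, by have hx := x.2; have hy := y.2; simp only [bmul]; omega⟩⟩

instance : One Cplus := ⟨⟨(0, 0), le_refl 0⟩⟩

theorem Cplus.mul_def (x y : Cplus) : (x * y).1 = bmul x.1 y.1 := rfl

theorem Cplus.one_def : (1 : Cplus).1 = (0, 0) := rfl

instance : Monoid Cplus where
  mul_assoc x y z := Subtype.ext (by
    simp only [Cplus.mul_def, bmul, Prod.ext_iff]; omega)
  one_mul x := Subtype.ext (by
    have := x.2
    simp only [Cplus.mul_def, Cplus.one_def, bmul, Prod.ext_iff]; omega)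
  mul_one x := Subtype.ext (by
    have := x.2
    simp only [Cplus.mul_def, Cplus.one_def, bmul, Prod.ext_iff]; omega)

def lam (k : ℕ) : Cplus → Cplus :=
  fun x => ⟨(k * x.1.1, k * x.1.2), Nat.mul_le_mul_left k x.2⟩

def sig (l m : ℕ) : Cplus → Cplus := fun x =>
  if x.1.1 = x.1.2 then 1 else ⟨(l, l + m * (x.1.2 - x.1.1)), by omega⟩

def lamns (n s : ℕ) : Cplus → Cplus := fun x =>
  if x.1.1 = 0 then ⟨(0, n * x.1.2), Nat.zero_le _⟩
  else ⟨(n * x.1.1 - s, n * x.1.2 - s), by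
    have := Nat.mul_le_mul_left n x.2; omega⟩

def vsig : Cplus → Cplus := fun x =>
  if x.1 = (0, 0) then 1 else ⟨(x.1.1 + 1, x.1.2 + 1), by have := x.2; omega⟩

def bpow (x : ℕ × ℕ) : ℕ → ℕ × ℕ
  | 0 => (0, 0)
  | n + 1 => bmul (bpow x n) x

def Sset (i j k : ℕ) : Set (ℕ × ℕ) :=
  insert (i, i) {p | ∃ n, 1 ≤ n ∧ p = bpow (j, j + k) n}

/-- S_{i,j,k} = {(i,i)} ∪ {(j,j+k)ⁿ : n ≥ 1} is closed under bmul, has identity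
(i,i), satisfies (j,j+k)ⁿ = (j, j+n·k), and is isomorphic to (ℕ, +). -/
theorem Sset_iso (i j k : ℕ) (hij : i ≤ j) (hk : 1 ≤ k) :
    (∀ n, 1 ≤ n → bpow (j, j + k) n = (j, j + n * k)) ∧
    (∀ x ∈ Sset i j k, ∀ y ∈ Sset i j k, bmul x y ∈ Sset i j k) ∧
    (∀ x ∈ Sset i j k, bmul (i, i) x = x ∧ bmul x (i, i) = x) ∧
    ∃ J : ℕ → ℕ × ℕ, Function.Injective J ∧ Set.range J = Sset i j k ∧
      J 0 = (i, i) ∧ ∀ m n, J (m + n) = bmul (J m) (J n) := by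
  have hpow : ∀ n, 1 ≤ n → bpow (j, j + k) n = (j, j + n * k) := by
    intro n hn
    induction n with
    | zero => omega
    | succ m ih =>
      rcases Nat.eq_zero_or_pos m with hm | hm
      · subst hm; simp [bpow, bmul]
      · rw [bpow, ih hm]; simp only [bmul]
        have : m * k + k = (m + 1) * k := by ring
        ext <;> simp <;> omega
  have hid : ∀ x ∈ Sset i j k, bmul (i, i) x = x ∧ bmul x (i, i) = x := by
    intro x hx
    rcases hx with hx | ⟨n, hn, rfl⟩
    · subst hx; simp [bmul]
    · rw [hpow n hn]; constructor <;> (simp only [bmul]; ext <;> simp <;> omega)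
  refine ⟨hpow, ?_, hid, ?_⟩
  · intro x hx y hy
    rcases hx with hx | ⟨m, hm, rfl⟩
    · subst hx; rw [(hid y hy).1]; exact hy
    · rcases hy with hy | ⟨n, hn, rfl⟩
      · subst hy; rw [(hid _ (Or.inr ⟨m, hm, rfl⟩)).2]
        exact Or.inr ⟨m, hm, rfl⟩
      · right
        refine ⟨m + n, by omega, ?_⟩
        rw [hpow m hm, hpow n hn, hpow (m + n) (by omega)]
        simp only [bmul]
        have : m * k + n * k = (m + n) * k := by ring
        ext <;> simp <;> omega
  · refine ⟨fun n => if n = 0 then (i, i) else (j, j + n * k), ?_, ?_, by simp, ?_⟩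
    · intro m n h
      have hmk : m ≠ 0 → 1 * 1 ≤ m * k := fun h0 => Nat.mul_le_mul (by omega) hk
      have hnk : n ≠ 0 → 1 * 1 ≤ n * k := fun h0 => Nat.mul_le_mul (by omega) hk
      by_cases hm : m = 0 <;> by_cases hn : n = 0 <;>
          simp [hm, hn, Prod.ext_iff] at h ⊢
      · exact absurd h.2 (by have := hnk hn; omega)
      · exact absurd h.2 (by have := hmk hm; omega)
      · rcases h with h | h
        · exact h
        · omega
    · ext p
      constructor
      · rintro ⟨n, rfl⟩
        by_cases hn : n = 0
        · simp [hn, Sset]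
        · simp only [hn, if_neg hn]
          exact Or.inr ⟨n, by omega, (hpow n (by omega)).symm⟩
      · rintro (rfl | ⟨n, hn, rfl⟩)
        · exact ⟨0, by simp⟩
        · exact ⟨n, by rw [hpow n hn]; simp; omega⟩
    · intro m n
      by_cases hm : m = 0 <;> by_cases hn : n = 0
      · simp [hm, hn, bmul]
      · simp only [hm, hn]; simp only [if_neg hn, zero_add, if_pos rfl]
        simp only [bmul]; ext <;> simp <;> omega
      · simp only [hm, hn]; simp only [if_neg hm, add_zero, if_pos rfl]
        simp only [bmul]; ext <;> simp <;> omega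
      · have hmn : m + n ≠ 0 := by omega
        simp only [if_neg hm, if_neg hn, if_neg hmn, bmul]
        have : m * k + n * k = (m + n) * k := by ring
        ext <;> simp <;> omega
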